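/- arXiv:1912.12606 — 5 statements merged into one kernel-verified Lean document; each statement's English description precedes it below -/
import Mathlib

section
/- Let λ ∈ ℂ with 0 < |λ| < 1, and let f(z) = Σ_{j≥0} c_j z^j have pre-periodic coefficients: c_{j+p} = c_j for all j ≥ ℓ+1, with f(λ) = 0. Define the Taylor polynomials f_k(λ) = Σ_{j=0}^{k} c_j λ^j. Then for every n ≥ 0, λ^p · f_{ℓ+1+n}(λ) = f_{ℓ+1+n+p}(λ). -/
/-- For a root `λ` of a power series with pre-periodic coefficients
(`c_{j+p} = c_j` for `j ≥ ℓ+1`), the Taylor polynomials satisfy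
`λ^p f_{ℓ+1+n}(λ) = f_{ℓ+1+n+p}(λ)`. -/
theorem stmt_6 (lam : ℂ) (hne : lam ≠ 0) (hlt : ‖lam‖ < 1)
    (l p : ℕ) (hp : 1 ≤ p) (c : ℕ → ℂ)
    (hc : ∀ j, c j = -1 ∨ c j = 0 ∨ c j = 1)
    (hper : ∀ j, l + 1 ≤ j → c (j + p) = c j)
    (hroot : (∑' j : ℕ, c j * lam ^ j) = 0) (n : ℕ) :
    lam ^ p * (∑ j ∈ Finset.range (l + 1 + n + 1), c j * lam ^ j) =
      ∑ j ∈ Finset.range (l + 1 + n + p + 1), c j * lam ^ j := by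
  rw [show l + 1 + n + p + 1 = (l + 1 + n + 1) + p from by ring]
  set g : ℕ → ℂ := fun j => c j * lam ^ j with hg
  have hsum : Summable g := by
    apply Summable.of_norm
    apply Summable.of_nonneg_of_le (fun j => norm_nonneg _) (fun j => ?_)
      (summable_geometric_of_lt_one (norm_nonneg lam) hlt)
    rw [hg]
    simp only [norm_mul, norm_pow]
    rcases hc j with h | h | h <;> simp [h]
  set k := l + 1 + n + 1 with hk
  have h1 := hsum.sum_add_tsum_nat_add k
  have h2 := hsum.sum_add_tsum_nat_add (k + p)
  have htail : lam ^ p * (∑' j, g (j + k)) = ∑' j, g (j + (k + p)) := by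
    rw [← tsum_mul_left]
    congr 1; funext j
    have hcp : c (j + k + p) = c (j + k) := hper (j + k) (by omega)
    simp only [hg]
    rw [show j + (k + p) = j + k + p from by ring, hcp]
    ring
  have hroot' : (∑' j, g j) = 0 := hroot
  linear_combination lam ^ p * h1 - h2 - htail + (lam ^ p - 1) * hroot'
end

section
/- For every λ ∈ ℂ with (√5-1)/2 < |λ| < 2/3 and 0 < arg(λ) < 5π/32, we have 1 - |λ| > |1 - λ|/2. -/
open Real Complex

theorem stmt_7 (lam : ℂ)
    (h1 : (Real.sqrt 5 - 1) / 2 < ‖lam‖)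
    (h2 : ‖lam‖ < 2 / 3)
    (h3 : 0 < lam.arg) (h4 : lam.arg < 5 * Real.pi / 32) :
    1 - ‖lam‖ > ‖1 - lam‖ / 2 := by
  set r := ‖lam‖ with hr
  have hr0 : 0 ≤ r := norm_nonneg lam
  have hre : r * Real.cos lam.arg = lam.re := Complex.norm_mul_cos_arg lam
  have hsq : lam.re ^ 2 + lam.im ^ 2 = r ^ 2 := by
    rw [hr, Complex.sq_norm, Complex.normSq_apply]
    ring
  have hcos : (7:ℝ)/8 < Real.cos lam.arg := by
    have hpi : Real.pi < 3.15 := by linarith [Real.pi_lt_d2]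
    have hb := Real.one_sub_sq_div_two_le_cos (x := lam.arg)
    nlinarith [sq_nonneg lam.arg]
  set a := ‖1 - lam‖ with ha
  have ha0 : 0 ≤ a := norm_nonneg _
  have ha2 : a ^ 2 = (1 - lam.re) ^ 2 + lam.im ^ 2 := by
    rw [ha, Complex.sq_norm, Complex.normSq_apply]
    simp [Complex.sub_re, Complex.sub_im]; ring
  nlinarith [sq_nonneg (2 * (1 - r) - a), sq_nonneg (2/3 - r),
    mul_nonneg hr0 (by linarith : (0:ℝ) ≤ Real.cos lam.arg - 7/8)]
end

section
/- For every λ ∈ ℂ with (√5-1)/2 < |λ| < 2/3 and 0 < arg(λ) < 5π/32, we have 1 - |λ|² > |1 - λ|. -/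
open Real Complex

theorem stmt_8 (lam : ℂ)
    (h1 : (Real.sqrt 5 - 1) / 2 < ‖lam‖)
    (h2 : ‖lam‖ < 2 / 3)
    (h3 : 0 < lam.arg) (h4 : lam.arg < 5 * Real.pi / 32) :
    1 - (‖lam‖) ^ 2 > ‖(1 - lam)‖ := by
  set r := ‖lam‖ with hr
  have hne : lam ≠ 0 := by
    intro h; rw [h, Complex.arg_zero] at h3; exact lt_irrefl 0 h3
  have hr0 : 0 < r := norm_pos_iff.mpr hne
  -- cos bound
  have hθ : lam.arg < 0.5 := by
    have : Real.pi < 3.2 := by linarith [Real.pi_lt_d2]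
    nlinarith
  have hc : (23 : ℝ)/27 < Real.cos lam.arg := by
    have h5 := Real.one_sub_sq_div_two_le_cos (x := lam.arg)
    nlinarith
  -- re λ = r cos θ
  have hre : lam.re = r * Real.cos lam.arg := by
    rw [Complex.cos_arg hne]; field_simp; rfl
  have hsq : ‖(1 - lam)‖ ^ 2 = 1 - 2 * lam.re + r ^ 2 := by
    rw [Complex.sq_norm, Complex.normSq_sub, Complex.normSq_one]
    have : (Complex.normSq lam : ℝ) = r ^ 2 := by
      rw [← Complex.sq_norm]
    rw [this]
    simp [Complex.mul_re]
    ring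
  have h1r : 0 < 1 - r ^ 2 := by nlinarith
  have key : ‖(1 - lam)‖ ^ 2 < (1 - r ^ 2) ^ 2 := by
    rw [hsq, hre]
    nlinarith [Real.cos_le_one lam.arg, sq_nonneg (r - 2/3), mul_pos hr0 (sub_pos.2 hc)]
  exact lt_of_pow_lt_pow_left₀ 2 h1r.le key
end

section
/- Let λ ∈ ℂ with (√5-1)/2 < |λ| < 2/3 and 0 < arg(λ) < 5π/32, and suppose λ is a root of f(z) = Σ_{j=0}^{ℓ} c_j z^j + z^{ℓ+1}/(1-z). Then |f_{ℓ+1}(λ)| + |f_{ℓ+2}(λ)| > |λ|^{ℓ+2}/(1-|λ|), where f_k(λ) := Σ_{j=0}^{k} c_j λ^j denotes the Taylor polynomials (with c_j = 1 for j ≥ ℓ+1). -/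
set_option maxHeartbeats 1000000

/-- For `λ` in the sector `S` and a root of a rational type `(ℓ,1)` power
series, `|f_{ℓ+1}(λ)| + |f_{ℓ+2}(λ)| > |λ|^{ℓ+2}/(1-|λ|)`. -/
theorem stmt_13 (lam : ℂ)
    (h1 : (Real.sqrt 5 - 1) / 2 < ‖lam‖)
    (h2 : ‖lam‖ < 2 / 3)
    (h3 : 0 < lam.arg) (h4 : lam.arg < 5 * Real.pi / 32)
    (l : ℕ) (c : ℕ → ℂ) (hc0 : c 0 = 1)
    (hc : ∀ j ≤ l, c j = -1 ∨ c j = 0 ∨ c j = 1)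
    (hroot : (∑ j ∈ Finset.range (l + 1), c j * lam ^ j) +
      lam ^ (l + 1) / (1 - lam) = 0) :
    ‖(∑ j ∈ Finset.range (l + 1), c j * lam ^ j) + lam ^ (l + 1)‖ +
    ‖(∑ j ∈ Finset.range (l + 1), c j * lam ^ j) + lam ^ (l + 1)
      + lam ^ (l + 2)‖ >
      ‖lam‖ ^ (l + 2) / (1 - ‖lam‖) := by
  set S := ∑ j ∈ Finset.range (l + 1), c j * lam ^ j with hS
  set r := ‖lam‖ with hr
  have hsqrt : (1:ℝ) < Real.sqrt 5 := by
    nlinarith [Real.sq_sqrt (by norm_num : (5:ℝ) ≥ 0), Real.sqrt_nonneg 5]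
  have hrpos : 0 < r := lt_trans (by linarith) h1
  have hr1 : r < 1 := lt_trans h2 (by norm_num)
  have hlamne : lam ≠ 0 := by
    intro h; rw [h] at hr; simp at hr; linarith
  have hne : (1:ℂ) - lam ≠ 0 := by
    intro h
    have : lam = 1 := by linear_combination -h
    rw [this] at hr
    simp at hr
    rw [hr] at h2; norm_num at h2
  have hd : 0 < ‖1 - lam‖ := by
    exact norm_pos_iff.mpr hne
  set d := ‖1 - lam‖ with hdd
  -- rewrite root equation
  have hroot' : S * (1 - lam) + lam ^ (l + 1) = 0 := by
    have := hroot
    field_simp at this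
    linear_combination this
  have e1 : (S + lam ^ (l + 1)) * (1 - lam) = -lam ^ (l + 2) := by
    linear_combination hroot'
  have e2 : (S + lam ^ (l + 1) + lam ^ (l + 2)) * (1 - lam) = -lam ^ (l + 3) := by
    linear_combination hroot'
  have a1 : ‖S + lam ^ (l + 1)‖ = r ^ (l + 2) / d := by
    have := congrArg (fun z : ℂ => ‖z‖) e1
    simp only [norm_mul, norm_neg, norm_pow] at this
    field_simp at this ⊢
    linarith [this]
  have a2 : ‖S + lam ^ (l + 1) + lam ^ (l + 2)‖ = r ^ (l + 3) / d := by
    have := congrArg (fun z : ℂ => ‖z‖) e2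
    simp only [norm_mul, norm_neg, norm_pow] at this
    field_simp at this ⊢
    linarith [this]
  rw [a1, a2]
  -- key inequality : d < 1 - r^2
  have hre : lam.re = r * Real.cos lam.arg := by
    rw [Complex.cos_arg hlamne]
    field_simp
    rw [hr]
  have hcos : Real.cos lam.arg > 7/8 := by
    have hpi : Real.pi < 3.15 := Real.pi_lt_d2
    have hθ : lam.arg < 1/2 := by nlinarith
    have := Real.one_sub_sq_div_two_le_cos (x := lam.arg)
    nlinarith
  have hd2 : d ^ 2 = 1 - 2 * lam.re + r ^ 2 := by
    rw [hdd, hr, Complex.sq_norm, Complex.sq_norm, Complex.normSq_apply,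
      Complex.normSq_apply]
    simp [Complex.sub_re, Complex.sub_im]
    ring
  have hkey : d < 1 - r ^ 2 := by
    by_contra hcon
    push_neg at hcon
    have h1r2 : 0 < 1 - r ^ 2 := by nlinarith
    have hdsq : (1 - r ^ 2) ^ 2 ≤ d ^ 2 := by nlinarith
    have h2c : 2 * r * Real.cos lam.arg ≤ 3 * r ^ 2 - r ^ 4 := by nlinarith [hd2, hre]
    have h2c' : 2 * Real.cos lam.arg ≤ 3 * r - r ^ 3 :=
      le_of_mul_le_mul_left
        (show r * (2 * Real.cos lam.arg) ≤ r * (3 * r - r ^ 3) by nlinarith [h2c]) hrpos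
    have hub : 3 * r - r ^ 3 < 46 / 27 := by
      nlinarith [mul_pos (show (0:ℝ) < 2/3 - r by linarith)
        (show (0:ℝ) < 23/9 - 2*r/3 - r^2 by nlinarith)]
    linarith
  have hp : 0 < r ^ (l + 2) := pow_pos hrpos _
  have h3p : r ^ (l + 3) = r ^ (l + 2) * r := by ring
  rw [h3p, gt_iff_lt, ← add_div, div_lt_div_iff₀ (by linarith) hd]
  nlinarith [hp, hkey, hd, hrpos]
end

section
/- Let λ be the root of f(z) = (1 + z + z² - 2z³)/(1 - z³) with λ ≈ -0.366 + 0.520i, i.e. λ satisfies 1 + λ + λ² = 2λ³, (√5-1)/2 < |λ| < 2/3, and 2π/3 < arg(λ) < 23π/32. Then 2|1 + λ| > |λ|²/(1-|λ|). -/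
/-- For the landmark point `λ₅` (root of `1+z+z²-2z³` with the stated modulus
and argument bounds), `2|1+λ| > |λ|²/(1-|λ|)`. -/
theorem stmt_15 (lam : ℂ) (heq : 1 + lam + lam ^ 2 = 2 * lam ^ 3)
    (h1 : (Real.sqrt 5 - 1) / 2 < ‖lam‖)
    (h2 : ‖lam‖ < 2 / 3)
    (h3 : 2 * Real.pi / 3 < lam.arg) (h4 : lam.arg < 23 * Real.pi / 32) :
    2 * ‖1 + lam‖ >
      (‖lam‖) ^ 2 / (1 - ‖lam‖) := by
  set r := ‖lam‖ with hrdef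
  have hsqrt5 : (2:ℝ) < Real.sqrt 5 := by
    nlinarith [Real.sq_sqrt (by norm_num : (5:ℝ) ≥ 0), Real.sqrt_nonneg 5]
  have hr0 : 0 < r := lt_trans (by linarith) h1
  have hlam0 : lam ≠ 0 := by
    intro h
    rw [hrdef, h, norm_zero] at hr0
    exact lt_irrefl 0 hr0
  -- factorization
  have key : 1 + lam = lam ^ 2 * (2 * lam - 1) := by linear_combination heq
  have habs : ‖1 + lam‖ = r ^ 2 * ‖2 * lam - 1‖ := by
    rw [key, norm_mul, norm_pow]
  set s := ‖2 * lam - 1‖ with hsdef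
  -- Re lam < -r/2
  have hpi : Real.pi > 0 := Real.pi_pos
  have hargpi : lam.arg < Real.pi := by nlinarith
  have hcos : Real.cos lam.arg < Real.cos (2 * Real.pi / 3) := by
    apply Real.cos_lt_cos_of_nonneg_of_le_pi (by positivity) (le_of_lt hargpi) h3
  have hcosval : Real.cos (2 * Real.pi / 3) = -(1/2) := by
    have : 2 * Real.pi / 3 = Real.pi - Real.pi / 3 := by ring
    rw [this, Real.cos_pi_sub, Real.cos_pi_div_three]
  have hre : lam.re < -(r / 2) := by
    have := Complex.cos_arg hlam0
    have hre' : lam.re = r * Real.cos lam.arg := by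
      field_simp at this; rw [← hrdef] at this; linarith [this]
    rw [hre']
    rw [hcosval] at hcos
    nlinarith
  -- s^2 = 4 r^2 - 4 re + 1 > 4r^2 + 2r + 1
  have hs2 : s ^ 2 > 4 * r ^ 2 + 2 * r + 1 := by
    have h1' : s ^ 2 = Complex.normSq (2 * lam - 1) := Complex.sq_norm _
    have h2' : r ^ 2 = Complex.normSq lam := Complex.sq_norm _
    rw [Complex.normSq_apply] at h1' h2'
    norm_num [Complex.sub_re, Complex.sub_im, Complex.mul_re, Complex.mul_im,
      Complex.one_re, Complex.one_im] at h1'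
    nlinarith
  have hs0 : 0 < s := by
    have := norm_nonneg (2 * lam - 1)
    rw [← hsdef] at this
    nlinarith
  have h1r : 0 < 1 - r := by linarith
  -- key polynomial inequality: 2 s (1-r) > 1
  have ht : 1 < 2 * s * (1 - r) := by
    nlinarith [mul_pos hs0 h1r, sq_nonneg (2 * s * (1 - r) - 1), sq_nonneg r,
      mul_pos hr0 hr0, sq_nonneg (1 - r), mul_pos (mul_pos hr0 hr0) hr0]
  rw [habs, gt_iff_lt, div_lt_iff₀ h1r]
  nlinarith [mul_pos (mul_pos hr0 hr0) (sub_pos.mpr ht)]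
end
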